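/- In the restart framework, suppose exactly p outer indices have K_i finite (so the outer indices are 1,…,p+1 with K_{p+1} = +∞). Then there exist an outer index i and inner index j with y_{i,j} defined and (f(y_{i,j}) − f*)/(f* − f_slb) ≤ ε'; moreover, letting N̂ := Σ_{i'=1}^{i−1} K_{i'} + j denote the total number of inner iterations prior to and including the first such pair (i,j), it holds that either N̂ ≤ Σ_{i=1}^{p+1} J_i + I_{p+1}, or both N̂ ≤ Σ_{i=1}^{p+1} J_i + I_p + I_{p+1} and K_p ≥ J_p + 1. -/

import Mathlib

/-- (Proposition: in the restart framework with exactly `p` finite restarts,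
an `ε'`-relative solution `y_{i,j}` is reached, and the total number of inner iterations up to
the first such pair is bounded by one of two expressions). -/
theorem restart_framework_total_count {n : ℕ} (Q : Set (EuclideanSpace ℝ (Fin n)))
    (hQne : Q.Nonempty) (hQcl : IsClosed Q) (hQcv : Convex ℝ Q)
    (f : EuclideanSpace ℝ (Fin n) → ℝ) (hfc : ConvexOn ℝ Q f)
    (fstar : ℝ) (hattain : ∃ z ∈ Q, f z = fstar) (hmin : ∀ z ∈ Q, fstar ≤ f z)
    (fslb : ℝ) (hslb : fslb < fstar)
    (B v ε' : ℝ) (hB : 0 < B) (hv : 0 < v) (hBv : v ≤ B - B ^ 2) (hB2v : 2 * v ≤ B)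
    (hε' : 0 < ε')
    (x y : ℕ → ℕ → EuclideanSpace ℝ (Fin n)) (K : ℕ → ℕ∞)
    (x0 : EuclideanSpace ℝ (Fin n)) (hx0 : x0 ∈ Q)
    (hx10 : x 1 0 = x0) (hy10 : y 1 0 = x0)
    (hmem : ∀ i j : ℕ, 1 ≤ i → (j : ℕ∞) ≤ K i → x i j ∈ Q ∧ y i j ∈ Q)
    (hKlt : ∀ i j : ℕ, 1 ≤ i → (j : ℕ∞) < K i →
      B ≤ (f (x i j) - fslb) / (f (x i 0) - fslb))
    (hKeq : ∀ i j : ℕ, 1 ≤ i → K i = (j : ℕ∞) →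
      (f (x i j) - fslb) / (f (x i 0) - fslb) < B)
    (hrestart : ∀ i j : ℕ, 1 ≤ i → K i = (j : ℕ∞) →
      x (i + 1) 0 = x i j ∧ y (i + 1) 0 = x i j)
    (J I : ℕ → ℕ)
    (hJ : ∀ i k : ℕ, 1 ≤ i → J i ≤ k → (k : ℕ∞) ≤ K i →
      f (x i k) - fstar ≤ v * (f (x i 0) - fslb))
    (hI : ∀ i k : ℕ, 1 ≤ i → I i ≤ k → (k : ℕ∞) ≤ K i →
      f (y i k) - fstar ≤ v * ε' * (f (x i 0) - fslb))
    (p : ℕ) (hfin : ∀ i : ℕ, 1 ≤ i → i ≤ p → K i ≠ ⊤) (hinf : K (p + 1) = ⊤) :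
    ∃ i j : ℕ, 1 ≤ i ∧ (j : ℕ∞) ≤ K i ∧ (∀ i' : ℕ, 1 ≤ i' → i' < i → K i' ≠ ⊤) ∧
      (f (y i j) - fstar) / (fstar - fslb) ≤ ε' ∧
      ((∑ i' ∈ Finset.Icc 1 (i - 1), (K i').toNat) + j ≤
          (∑ i' ∈ Finset.Icc 1 (p + 1), J i') + I (p + 1) ∨
        (((∑ i' ∈ Finset.Icc 1 (i - 1), (K i').toNat) + j ≤
            (∑ i' ∈ Finset.Icc 1 (p + 1), J i') + I p + I (p + 1)) ∧
          ((J p + 1 : ℕ) : ℕ∞) ≤ K p)) := by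
  have hFpos : (0:ℝ) < fstar - fslb := by linarith
  -- Every initial point of a stage lies in Q, so its gap to fslb is at least fstar - fslb.
  have hDge : ∀ i : ℕ, 1 ≤ i → fstar - fslb ≤ f (x i 0) - fslb := by
    intro i hi
    have hx := (hmem i 0 hi zero_le).1
    have := hmin _ hx
    linarith
  have hDpos : ∀ i : ℕ, 1 ≤ i → 0 < f (x i 0) - fslb := fun i hi =>
    lt_of_lt_of_le hFpos (hDge i hi)
  -- Restart contraction: D_{i+1} < B * D_i for stages with finite K.
  have hstep : ∀ i : ℕ, 1 ≤ i → i ≤ p →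
      f (x (i+1) 0) - fslb < B * (f (x i 0) - fslb) := by
    intro i h1 h2
    have hK : K i ≠ ⊤ := hfin i h1 h2
    have hKk : K i = ((K i).toNat : ℕ∞) := (ENat.coe_toNat hK).symm
    have hrat := hKeq i (K i).toNat h1 hKk
    have hre := (hrestart i (K i).toNat h1 hKk).1
    rw [div_lt_iff₀ (hDpos i h1)] at hrat
    rw [hre]; linarith
  -- Overage: if J i < K i then (B - v) * D_i ≤ fstar - fslb.
  have hover : ∀ i : ℕ, 1 ≤ i → (J i : ℕ∞) < K i →
      (B - v) * (f (x i 0) - fslb) ≤ fstar - fslb := by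
    intro i h1 hlt
    have hD := hDpos i h1
    have h1' := hJ i (J i) h1 le_rfl hlt.le
    have h2' := hKlt i (J i) h1 hlt
    rw [le_div_iff₀ hD] at h2'
    linarith
  -- No overage is possible strictly before stage p.
  have hno : ∀ i : ℕ, 1 ≤ i → i + 1 ≤ p → (K i).toNat ≤ J i := by
    intro i h1 h2
    by_contra h
    push_neg at h
    have hKne : K i ≠ ⊤ := hfin i h1 (by omega)
    have hlt : (J i : ℕ∞) < K i := by
      rw [← ENat.coe_toNat hKne]
      exact_mod_cast h
    have hov := hover i h1 hlt
    have hs1 := hstep i h1 (by omega)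
    have hs2 := hstep (i+1) (by omega) h2
    have hD2 := hDge (i+2) (by omega)
    have hDi := hDpos i h1
    nlinarith [mul_lt_mul_of_pos_left hs1 hB,
      mul_nonneg (by nlinarith : (0:ℝ) ≤ B - B^2 - v) hDi.le]
  -- At stage p+1 (infinite stage), v * D_{p+1} ≤ fstar - fslb.
  have hvp1 : v * (f (x (p+1) 0) - fslb) ≤ fstar - fslb := by
    have hlt : (J (p+1) : ℕ∞) < K (p+1) := by
      rw [hinf]; exact ENat.coe_lt_top _
    have hov := hover (p+1) (by omega) hlt
    have hD := hDpos (p+1) (by omega)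
    nlinarith [mul_nonneg (by linarith : (0:ℝ) ≤ B - 2*v) hD.le]
  -- Certification of an ε'-relative solution.
  have hcert : ∀ i j : ℕ, 1 ≤ i → I i ≤ j → (j : ℕ∞) ≤ K i →
      v * (f (x i 0) - fslb) ≤ fstar - fslb →
      (f (y i j) - fstar) / (fstar - fslb) ≤ ε' := by
    intro i j h1 h2 h3 h4
    have h5 := hI i j h1 h2 h3
    rw [div_le_iff₀ hFpos]
    nlinarith [mul_le_mul_of_nonneg_left h4 hε'.le]
  by_cases hc : 1 ≤ p ∧ (J p : ℕ∞) < K p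
  · obtain ⟨hp1, hJp⟩ := hc
    obtain ⟨q, rfl⟩ : ∃ q, p = q + 1 := ⟨p - 1, by omega⟩
    have hKp1 : ((J (q+1) + 1 : ℕ) : ℕ∞) ≤ K (q+1) := by
      push_cast
      exact Order.add_one_le_of_lt hJp
    have hsumq : ∑ i' ∈ Finset.Icc 1 q, (K i').toNat ≤ ∑ i' ∈ Finset.Icc 1 q, J i' :=
      Finset.sum_le_sum (fun i' hi' => by
        rw [Finset.mem_Icc] at hi'
        exact hno i' hi'.1 (by omega))
    have hsub : ∑ i' ∈ Finset.Icc 1 q, J i' ≤ ∑ i' ∈ Finset.Icc 1 (q+1+1), J i' :=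
      Finset.sum_le_sum_of_subset (Finset.Icc_subset_Icc_right (by omega))
    have hvDp : v * (f (x (q+1) 0) - fslb) ≤ fstar - fslb := by
      have hov := hover (q+1) hp1 hJp
      have hD := hDpos (q+1) hp1
      nlinarith [mul_nonneg (by linarith : (0:ℝ) ≤ B - 2*v) hD.le]
    by_cases hIp : (I (q+1) : ℕ∞) ≤ K (q+1)
    · refine ⟨q+1, I (q+1), hp1, hIp, fun i' h1 h2 => hfin i' h1 (by omega),
        hcert _ _ hp1 le_rfl hIp hvDp, Or.inr ⟨?_, hKp1⟩⟩
      simp only [Nat.add_sub_cancel]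
      omega
    · push_neg at hIp
      have hKne : K (q+1) ≠ ⊤ := hfin _ hp1 le_rfl
      have hKtoNat : (K (q+1)).toNat ≤ I (q+1) := by
        rw [← ENat.coe_toNat hKne] at hIp
        exact_mod_cast hIp.le
      have hsplit : ∑ i' ∈ Finset.Icc 1 (q+1), (K i').toNat =
          (∑ i' ∈ Finset.Icc 1 q, (K i').toNat) + (K (q+1)).toNat :=
        Finset.sum_Icc_succ_top (by omega) _
      refine ⟨q+1+1, I (q+1+1), by omega, by rw [hinf]; exact le_top,
        fun i' h1 h2 => hfin i' h1 (by omega),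
        hcert _ _ (by omega) le_rfl (by rw [hinf]; exact le_top)
          hvp1, Or.inr ⟨?_, hKp1⟩⟩
      rw [show q + 1 + 1 - 1 = q + 1 by omega]
      omega
  · push_neg at hc
    have hsum : ∑ i' ∈ Finset.Icc 1 p, (K i').toNat ≤ ∑ i' ∈ Finset.Icc 1 p, J i' :=
      Finset.sum_le_sum (fun i' hi' => by
        rw [Finset.mem_Icc] at hi'
        rcases lt_or_eq_of_le hi'.2 with h | h
        · exact hno i' hi'.1 (by omega)
        · subst h
          have hle := hc hi'.1
          have hKne : K i' ≠ ⊤ := hfin i' hi'.1 le_rfl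
          rw [← ENat.coe_toNat hKne] at hle
          exact_mod_cast hle)
    have hsub : ∑ i' ∈ Finset.Icc 1 p, J i' ≤ ∑ i' ∈ Finset.Icc 1 (p+1), J i' :=
      Finset.sum_le_sum_of_subset (Finset.Icc_subset_Icc_right (by omega))
    refine ⟨p+1, I (p+1), by omega, by rw [hinf]; exact le_top,
      fun i' h1 h2 => hfin i' h1 (by omega),
      hcert _ _ (by omega) le_rfl (by rw [hinf]; exact le_top) hvp1, Or.inl ?_⟩
    simp only [Nat.add_sub_cancel]
    omega
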